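/- Let K be a field of characteristic different from 2 and let a, b, c, d, x be nonzero elements of K. Then the quadratic form ⟨⟨a,b⟩⟩ ⊥ ⟨⟨c,d⟩⟩ ⊥ ⟨⟨a,bx⟩⟩ ⊥ ⟨⟨c,dx⟩⟩ ⊥ H⁶ (of dimension 28) is equivalent to ⟨⟨x,ac⟩⟩ ⊥ ⟨⟨a,c,x⟩⟩ ⊥ ⟨⟨a,b,bx⟩⟩ ⊥ ⟨⟨c,d,dx⟩⟩ (of dimension 28). (This is the equidimensional form of the Witt-ring identity established in display (3.3) of Proposition 3.3 of the paper.) -/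

import Mathlib

open QuadraticMap

/-- The `m`-fold Pfister form `⟨⟨a₁,…,a_m⟩⟩`: the diagonal quadratic form of dimension `2^m`
whose entries are the products `∏_{i ∈ S} (−a_i)` over all subsets `S` of `{1,…,m}`,
here modeled with subsets `S : Fin m → Bool`. -/
noncomputable def pfister (K : Type*) [Field K] {m : ℕ} (a : Fin m → K) :
    QuadraticForm K ((Fin m → Bool) → K) :=
  weightedSumSquares K (fun S : Fin m → Bool => ∏ i : Fin m, if S i then -a i else 1)

/-- `H^m`: the orthogonal sum of `m` copies of the hyperbolic plane `⟨1, −1⟩`. -/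
noncomputable def hypPlanes (K : Type*) [Field K] (m : ℕ) :
    QuadraticForm K (Fin m × Fin 2 → K) :=
  weightedSumSquares K (fun p : Fin m × Fin 2 => if p.2 = 0 then (1 : K) else -1)

section Aux

variable {K : Type*} [Field K]

noncomputable def scaleEquiv {ι ι' : Type*} (e : ι ≃ ι') (t : ι → K) (ht : ∀ i, t i ≠ 0) :
    (ι → K) ≃ₗ[K] (ι' → K) where
  toFun f := fun j => t (e.symm j) * f (e.symm j)
  invFun g := fun i => (t i)⁻¹ * g (e i)
  map_add' f g := by funext j; simp [mul_add]
  map_smul' r f := by funext j; simp [Pi.smul_apply, smul_eq_mul]; ring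
  left_inv f := by funext i; simp [inv_mul_cancel_left₀ (ht i)]
  right_inv g := by funext j; simp [mul_inv_cancel_left₀ (ht _)]

theorem wss_equiv {ι ι' : Type*} [Fintype ι] [Fintype ι'] (e : ι ≃ ι')
    (w : ι → K) (w' : ι' → K) (t : ι → K) (ht : ∀ i, t i ≠ 0)
    (h : ∀ i, w i = w' (e i) * (t i)^2) :
    Equivalent (weightedSumSquares K w) (weightedSumSquares K w') := by
  refine ⟨{ scaleEquiv e t ht with map_app' := fun f => ?_ }⟩
  rw [weightedSumSquares_apply, weightedSumSquares_apply]
  calc ∑ j, w' j • (scaleEquiv e t ht f j * scaleEquiv e t ht f j)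
      = ∑ i, w' (e i) • (scaleEquiv e t ht f (e i) * scaleEquiv e t ht f (e i)) :=
        (Equiv.sum_comp e _).symm
    _ = ∑ i, w i • (f i * f i) := Finset.sum_congr rfl fun i _ => by
        simp only [scaleEquiv, LinearEquiv.coe_mk, LinearMap.coe_mk, AddHom.coe_mk, Equiv.symm_apply_apply, smul_eq_mul, h i]
        ring

def sumSplit {ι₁ ι₂ : Type*} : ((ι₁ ⊕ ι₂) → K) ≃ₗ[K] ((ι₁ → K) × (ι₂ → K)) where
  toFun f := (f ∘ Sum.inl, f ∘ Sum.inr)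
  invFun p := Sum.elim p.1 p.2
  map_add' f g := rfl
  map_smul' r f := rfl
  left_inv f := by funext s; cases s <;> rfl
  right_inv p := rfl

theorem wss_sum {ι₁ ι₂ : Type*} [Fintype ι₁] [Fintype ι₂] (w₁ : ι₁ → K) (w₂ : ι₂ → K) :
    Equivalent (weightedSumSquares K (Sum.elim w₁ w₂))
      ((weightedSumSquares K w₁).prod (weightedSumSquares K w₂)) := by
  refine ⟨{ (sumSplit : ((ι₁ ⊕ ι₂) → K) ≃ₗ[K] _) with map_app' := fun f => ?_ }⟩
  simp only [QuadraticMap.prod_apply, weightedSumSquares_apply]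
  rw [Fintype.sum_sum_type]
  rfl

theorem wss_curry {ι κ : Type*} [Fintype ι] [Fintype κ] (w : ι × κ → K) :
    Equivalent (weightedSumSquares K w)
      (QuadraticMap.pi fun i => weightedSumSquares K (fun k => w (i, k))) := by
  refine ⟨{ (LinearEquiv.curry K K ι κ) with map_app' := fun f => ?_ }⟩
  simp only [QuadraticMap.pi_apply, weightedSumSquares_apply]
  rw [Fintype.sum_prod_type]
  rfl

def hypLequiv (h2 : (2:K) ≠ 0) (s : K) (hs : s ≠ 0) : (Fin 2 → K) ≃ₗ[K] (Fin 2 → K) where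
  toFun f := ![(s*(f 0 + f 1) + (f 0 - f 1))/2, (s*(f 0 + f 1) - (f 0 - f 1))/2]
  invFun g := ![((g 0 + g 1)/s + (g 0 - g 1))/2, ((g 0 + g 1)/s - (g 0 - g 1))/2]
  map_add' f g := by
    funext j
    fin_cases j <;> simp <;> ring
  map_smul' r f := by
    funext j
    fin_cases j <;> simp <;> ring
  left_inv f := by
    funext j
    fin_cases j <;> simp <;> field_simp <;> ring
  right_inv g := by
    funext j
    fin_cases j <;> simp <;> field_simp <;> ring

theorem hyp2 (h2 : (2:K) ≠ 0) (s : K) (hs : s ≠ 0) :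
    Equivalent (weightedSumSquares K ![s, -s]) (weightedSumSquares K ![(1:K), -1]) := by
  refine ⟨{ hypLequiv h2 s hs with map_app' := fun f => ?_ }⟩
  rw [weightedSumSquares_apply, weightedSumSquares_apply, Fin.sum_univ_two, Fin.sum_univ_two]
  simp only [hypLequiv, LinearEquiv.coe_mk, smul_eq_mul, Matrix.cons_val_zero,
    Matrix.cons_val_one, Matrix.head_cons]
  field_simp
  ring

def e4 : Fin 4 ≃ (Fin 2 → Bool) where
  toFun k i := Nat.testBit k.val i.val
  invFun S := (bif S 1 then 2 else 0) + (bif S 0 then 1 else 0)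
  left_inv := by decide
  right_inv := by decide

def e8 : Fin 8 ≃ (Fin 3 → Bool) where
  toFun k i := Nat.testBit k.val i.val
  invFun S := (bif S 2 then 4 else 0) + (bif S 1 then 2 else 0) + (bif S 0 then 1 else 0)
  left_inv := by decide
  right_inv := by decide

end Aux


section Aux2

variable {K : Type*} [Field K]

theorem pfister2_equiv (u v : K) :
    Equivalent (weightedSumSquares K ![1,-u,-v,u*v]) (pfister K ![u,v]) := by
  refine wss_equiv e4 _ _ 1 (fun _ => one_ne_zero) ?_
  intro k
  fin_cases k <;> simp (config := { decide := true }) [e4, Fin.prod_univ_two] <;>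
    first | rfl | ring

theorem pfister3_equiv (u v w : K) :
    Equivalent (weightedSumSquares K ![1,-u,-v,u*v,-w,u*w,v*w,-(u*v*w)])
      (pfister K ![u,v,w]) := by
  refine wss_equiv e8 _ _ 1 (fun _ => one_ne_zero) ?_
  intro k
  fin_cases k <;>
    simp (config := { decide := true }) [e8, Fin.prod_univ_three, Matrix.cons_val_succ'] <;>
    first | rfl | ring

theorem hyp_equiv (h2 : (2:K) ≠ 0) (s : Fin 6 → K) (hs : ∀ i, s i ≠ 0) :
    Equivalent (weightedSumSquares K (fun p : Fin 6 × Fin 2 => ![s p.1, -(s p.1)] p.2))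
      (hypPlanes K 6) := by
  have hw : hypPlanes K 6
      = weightedSumSquares K (fun p : Fin 6 × Fin 2 => ![(1:K), -1] p.2) := by
    unfold hypPlanes
    congr 1
    funext p
    obtain ⟨i, j⟩ := p
    fin_cases j <;> rfl
  rw [hw]
  refine (wss_curry _).trans (Equivalent.trans ?_ (wss_curry _).symm)
  exact Equivalent.pi fun i => hyp2 h2 (s i) (hs i)

end Aux2

/-- Display (3.3): `⟨⟨a,b⟩⟩ ⊥ ⟨⟨c,d⟩⟩ ⊥ ⟨⟨a,bx⟩⟩ ⊥ ⟨⟨c,dx⟩⟩ ⊥ H⁶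
      ≃ ⟨⟨x,ac⟩⟩ ⊥ ⟨⟨a,c,x⟩⟩ ⊥ ⟨⟨a,b,bx⟩⟩ ⊥ ⟨⟨c,d,dx⟩⟩`. -/
theorem stmt_3 {K : Type*} [Field K] (hchar : ringChar K ≠ 2)
    (a b c d x : K) (ha : a ≠ 0) (hb : b ≠ 0) (hc : c ≠ 0) (hd : d ≠ 0) (hx : x ≠ 0) :
    QuadraticMap.Equivalent
      ((pfister K ![a, b]).prod ((pfister K ![c, d]).prod
        ((pfister K ![a, b * x]).prod ((pfister K ![c, d * x]).prod (hypPlanes K 6)))))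
      ((pfister K ![x, a * c]).prod ((pfister K ![a, c, x]).prod
        ((pfister K ![a, b, b * x]).prod (pfister K ![c, d, d * x])))) := by
  have h2 : (2:K) ≠ 0 := Ring.two_ne_zero hchar
  -- the six auxiliary hyperbolic scalars
  set s : Fin 6 → K := ![-(b*(b*x)), -(d*(d*x)), -(a*c), x*(a*c), -(a*b*(b*x)), -(c*d*(d*x))]
    with hs_def
  have hs : ∀ i, s i ≠ 0 := by
    intro i
    fin_cases i
    · exact neg_ne_zero.mpr (mul_ne_zero hb (mul_ne_zero hb hx))
    · exact neg_ne_zero.mpr (mul_ne_zero hd (mul_ne_zero hd hx))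
    · exact neg_ne_zero.mpr (mul_ne_zero ha hc)
    · exact mul_ne_zero hx (mul_ne_zero ha hc)
    · exact neg_ne_zero.mpr (mul_ne_zero (mul_ne_zero ha hb) (mul_ne_zero hb hx))
    · exact neg_ne_zero.mpr (mul_ne_zero (mul_ne_zero hc hd) (mul_ne_zero hd hx))
  -- left flattened weights
  set SW : Fin 6 × Fin 2 → K := fun p => ![s p.1, -(s p.1)] p.2 with hSW
  set WL : (Fin 4 ⊕ (Fin 4 ⊕ (Fin 4 ⊕ (Fin 4 ⊕ Fin 6 × Fin 2)))) → K :=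
    Sum.elim ![1,-a,-b,a*b] (Sum.elim ![1,-c,-d,c*d]
      (Sum.elim ![1,-a,-(b*x),a*(b*x)] (Sum.elim ![1,-c,-(d*x),c*(d*x)] SW))) with hWL
  set WR : (Fin 4 ⊕ (Fin 8 ⊕ (Fin 8 ⊕ Fin 8))) → K :=
    Sum.elim ![1,-x,-(a*c),x*(a*c)]
      (Sum.elim ![1,-a,-c,a*c,-x,a*x,c*x,-(a*c*x)]
        (Sum.elim ![1,-a,-b,a*b,-(b*x),a*(b*x),b*(b*x),-(a*b*(b*x))]
          ![1,-c,-d,c*d,-(d*x),c*(d*x),d*(d*x),-(c*d*(d*x))])) with hWR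
  have EL : Equivalent (weightedSumSquares K WL)
      ((pfister K ![a, b]).prod ((pfister K ![c, d]).prod
        ((pfister K ![a, b * x]).prod ((pfister K ![c, d * x]).prod (hypPlanes K 6))))) := by
    refine (wss_sum _ _).trans (Equivalent.prod (pfister2_equiv a b) ?_)
    refine (wss_sum _ _).trans (Equivalent.prod (pfister2_equiv c d) ?_)
    refine (wss_sum _ _).trans (Equivalent.prod (pfister2_equiv a (b*x)) ?_)
    refine (wss_sum _ _).trans (Equivalent.prod (pfister2_equiv c (d*x)) ?_)
    exact hyp_equiv h2 s hs
  have ER : Equivalent (weightedSumSquares K WR)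
      ((pfister K ![x, a * c]).prod ((pfister K ![a, c, x]).prod
        ((pfister K ![a, b, b * x]).prod (pfister K ![c, d, d * x])))) := by
    refine (wss_sum _ _).trans (Equivalent.prod (pfister2_equiv x (a*c)) ?_)
    refine (wss_sum _ _).trans (Equivalent.prod (pfister3_equiv a c x) ?_)
    exact (wss_sum _ _).trans
      (Equivalent.prod (pfister3_equiv a b (b*x)) (pfister3_equiv c d (d*x)))
  -- the permutation
  have EM : Equivalent (weightedSumSquares K WL) (weightedSumSquares K WR) := by
    let R1 : Fin 4 → (Fin 4 ⊕ (Fin 8 ⊕ (Fin 8 ⊕ Fin 8))) := Sum.inl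
    let R2 : Fin 8 → (Fin 4 ⊕ (Fin 8 ⊕ (Fin 8 ⊕ Fin 8))) := fun k => Sum.inr (Sum.inl k)
    let R3 : Fin 8 → (Fin 4 ⊕ (Fin 8 ⊕ (Fin 8 ⊕ Fin 8))) := fun k => Sum.inr (Sum.inr (Sum.inl k))
    let R4 : Fin 8 → (Fin 4 ⊕ (Fin 8 ⊕ (Fin 8 ⊕ Fin 8))) := fun k => Sum.inr (Sum.inr (Sum.inr k))
    let L1 : Fin 4 → (Fin 4 ⊕ (Fin 4 ⊕ (Fin 4 ⊕ (Fin 4 ⊕ Fin 6 × Fin 2)))) := Sum.inl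
    let L2 : Fin 4 → (Fin 4 ⊕ (Fin 4 ⊕ (Fin 4 ⊕ (Fin 4 ⊕ Fin 6 × Fin 2)))) :=
      fun k => Sum.inr (Sum.inl k)
    let L3 : Fin 4 → (Fin 4 ⊕ (Fin 4 ⊕ (Fin 4 ⊕ (Fin 4 ⊕ Fin 6 × Fin 2)))) :=
      fun k => Sum.inr (Sum.inr (Sum.inl k))
    let L4 : Fin 4 → (Fin 4 ⊕ (Fin 4 ⊕ (Fin 4 ⊕ (Fin 4 ⊕ Fin 6 × Fin 2)))) :=
      fun k => Sum.inr (Sum.inr (Sum.inr (Sum.inl k)))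
    let L5 : Fin 6 × Fin 2 → (Fin 4 ⊕ (Fin 4 ⊕ (Fin 4 ⊕ (Fin 4 ⊕ Fin 6 × Fin 2)))) :=
      fun p => Sum.inr (Sum.inr (Sum.inr (Sum.inr p)))
    let f : (Fin 4 ⊕ (Fin 4 ⊕ (Fin 4 ⊕ (Fin 4 ⊕ Fin 6 × Fin 2)))) →
        (Fin 4 ⊕ (Fin 8 ⊕ (Fin 8 ⊕ Fin 8))) :=
      Sum.elim ![R3 ⟨0, by norm_num⟩, R3 ⟨1, by norm_num⟩, R3 ⟨2, by norm_num⟩, R3 ⟨3, by norm_num⟩]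
        (Sum.elim ![R4 ⟨0, by norm_num⟩, R4 ⟨1, by norm_num⟩, R4 ⟨2, by norm_num⟩, R4 ⟨3, by norm_num⟩]
          (Sum.elim ![R2 ⟨0, by norm_num⟩, R2 ⟨1, by norm_num⟩, R3 ⟨4, by norm_num⟩, R3 ⟨5, by norm_num⟩]
            (Sum.elim ![R1 ⟨0, by norm_num⟩, R2 ⟨2, by norm_num⟩, R4 ⟨4, by norm_num⟩, R4 ⟨5, by norm_num⟩]
              (fun p => ![![R1 ⟨1, by norm_num⟩, R3 ⟨6, by norm_num⟩], ![R2 ⟨4, by norm_num⟩, R4 ⟨6, by norm_num⟩], ![R1 ⟨2, by norm_num⟩, R2 ⟨3, by norm_num⟩],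
                ![R1 ⟨3, by norm_num⟩, R2 ⟨7, by norm_num⟩], ![R3 ⟨7, by norm_num⟩, R2 ⟨5, by norm_num⟩], ![R4 ⟨7, by norm_num⟩, R2 ⟨6, by norm_num⟩]] p.1 p.2))))
    let finv : (Fin 4 ⊕ (Fin 8 ⊕ (Fin 8 ⊕ Fin 8))) →
        (Fin 4 ⊕ (Fin 4 ⊕ (Fin 4 ⊕ (Fin 4 ⊕ Fin 6 × Fin 2)))) :=
      Sum.elim ![L4 0, L5 (0,0), L5 (2,0), L5 (3,0)]
        (Sum.elim ![L3 0, L3 1, L4 1, L5 (2,1), L5 (1,0), L5 (4,1), L5 (5,1), L5 (3,1)]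
          (Sum.elim ![L1 0, L1 1, L1 2, L1 3, L3 2, L3 3, L5 (0,1), L5 (4,0)]
            ![L2 0, L2 1, L2 2, L2 3, L4 2, L4 3, L5 (1,1), L5 (5,0)]))
    let e : (Fin 4 ⊕ (Fin 4 ⊕ (Fin 4 ⊕ (Fin 4 ⊕ Fin 6 × Fin 2)))) ≃
        (Fin 4 ⊕ (Fin 8 ⊕ (Fin 8 ⊕ Fin 8))) :=
      ⟨f, finv, by decide, by decide⟩
    let t : (Fin 4 ⊕ (Fin 4 ⊕ (Fin 4 ⊕ (Fin 4 ⊕ Fin 6 × Fin 2)))) → K :=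
      Sum.elim 1 (Sum.elim 1 (Sum.elim 1 (Sum.elim 1
        (fun p => ![![b,1], ![d,1], ![1,1], ![1,1], ![1,b], ![1,d]] p.1 p.2))))
    have ht : ∀ i, t i ≠ 0 := by
      rintro (k | k | k | k | ⟨i, j⟩)
      · exact one_ne_zero
      · exact one_ne_zero
      · exact one_ne_zero
      · exact one_ne_zero
      · fin_cases i <;> fin_cases j
        · exact hb
        · exact one_ne_zero
        · exact hd
        · exact one_ne_zero
        · exact one_ne_zero
        · exact one_ne_zero
        · exact one_ne_zero
        · exact one_ne_zero
        · exact one_ne_zero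
        · exact hb
        · exact one_ne_zero
        · exact hd
    refine wss_equiv e WL WR t ht ?_
    rintro (k | k | k | k | ⟨i, j⟩)
    · fin_cases k
      · exact (show (1:K) = 1 * 1^2 by ring)
      · exact (show -a = -a * 1^2 by ring)
      · exact (show -b = -b * 1^2 by ring)
      · exact (show a*b = a*b * 1^2 by ring)
    · fin_cases k
      · exact (show (1:K) = 1 * 1^2 by ring)
      · exact (show -c = -c * 1^2 by ring)
      · exact (show -d = -d * 1^2 by ring)
      · exact (show c*d = c*d * 1^2 by ring)
    · fin_cases k
      · exact (show (1:K) = 1 * 1^2 by ring)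
      · exact (show -a = -a * 1^2 by ring)
      · exact (show -(b*x) = -(b*x) * 1^2 by ring)
      · exact (show a*(b*x) = a*(b*x) * 1^2 by ring)
    · fin_cases k
      · exact (show (1:K) = 1 * 1^2 by ring)
      · exact (show -c = -c * 1^2 by ring)
      · exact (show -(d*x) = -(d*x) * 1^2 by ring)
      · exact (show c*(d*x) = c*(d*x) * 1^2 by ring)
    · fin_cases i <;> fin_cases j
      · exact (show -(b*(b*x)) = -x * b^2 by ring)
      · exact (show -(-(b*(b*x))) = b*(b*x) * 1^2 by ring)
      · exact (show -(d*(d*x)) = -x * d^2 by ring)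
      · exact (show -(-(d*(d*x))) = d*(d*x) * 1^2 by ring)
      · exact (show -(a*c) = -(a*c) * 1^2 by ring)
      · exact (show -(-(a*c)) = a*c * 1^2 by ring)
      · exact (show x*(a*c) = x*(a*c) * 1^2 by ring)
      · exact (show -(x*(a*c)) = -(a*c*x) * 1^2 by ring)
      · exact (show -(a*b*(b*x)) = -(a*b*(b*x)) * 1^2 by ring)
      · exact (show -(-(a*b*(b*x))) = a*x * b^2 by ring)
      · exact (show -(c*d*(d*x)) = -(c*d*(d*x)) * 1^2 by ring)
      · exact (show -(-(c*d*(d*x))) = c*x * d^2 by ring)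
  exact EL.symm.trans (EM.trans ER)
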